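/- Let Q be a finite faithful connected quandle and α a central congruence of Q. If the quotient quandle Q/α is latin, i.e. (surjectivity) for all a, c ∈ Q there exists b with (b ◃ a) α c, and (injectivity) for all a, b, b' ∈ Q, (b ◃ a) α (b' ◃ a) implies b α b', then Q itself is latin: for every a ∈ Q the map b ↦ b ◃ a is a bijection of Q. -/
import Mathlib


open Quandles

/-- Left multiplication by `a` as a permutation of the quandle. -/
def QL {Q : Type*} [Quandle Q] (a : Q) : Equiv.Perm Q := Rack.act' a

/-- The displacement group of a quandle: the subgroup of `Equiv.Perm Q`
generated by `{L a * (L b)⁻¹ : a, b ∈ Q}`. -/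
def Dis (Q : Type*) [Quandle Q] : Subgroup (Equiv.Perm Q) :=
  Subgroup.closure {g : Equiv.Perm Q | ∃ a b : Q, g = QL a * (QL b)⁻¹}

/-- A congruence of a quandle: an equivalence relation compatible with `◃` and `◃⁻¹`. -/
structure QuandleCongruence (Q : Type*) [Quandle Q] where
  rel : Q → Q → Prop
  iseqv : Equivalence rel
  act_compat : ∀ {a b c d : Q}, rel a b → rel c d → rel (a ◃ c) (b ◃ d)
  invAct_compat : ∀ {a b c d : Q}, rel a b → rel c d → rel (a ◃⁻¹ c) (b ◃⁻¹ d)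

/-- The displacement group relative to a congruence `α`: generated by
`{L x * (L y)⁻¹ : x α y}`. -/
def DisRel (Q : Type*) [Quandle Q] (α : QuandleCongruence Q) : Subgroup (Equiv.Perm Q) :=
  Subgroup.closure {g : Equiv.Perm Q | ∃ x y : Q, α.rel x y ∧ g = QL x * (QL y)⁻¹}

/-- A congruence `α` is central if `Dis_α` is central in `Dis Q` and points related
by `α` have the same stabilizer in `Dis Q`. -/
def IsCentralCongruence (Q : Type*) [Quandle Q] (α : QuandleCongruence Q) : Prop :=
  (∀ g ∈ DisRel Q α, ∀ h ∈ Dis Q, g * h = h * g) ∧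
    ∀ x y : Q, α.rel x y → ∀ h : Equiv.Perm Q, h ∈ Dis Q → (h x = x ↔ h y = y)


theorem stmt8 (Q : Type*) [Quandle Q] [Finite Q]
    (hfaith : Function.Injective (fun a : Q => QL a))
    (hconn : ∀ x y : Q, ∃ g ∈ Dis Q, g x = y)
    (α : QuandleCongruence Q) (hcent : IsCentralCongruence Q α)
    (hsurj : ∀ a c : Q, ∃ b : Q, α.rel (b ◃ a) c)
    (hinj : ∀ a b b' : Q, α.rel (b ◃ a) (b' ◃ a) → α.rel b b') :
    ∀ a : Q, Function.Bijective (fun b : Q => b ◃ a) := by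
  intro a
  rw [← Finite.injective_iff_bijective]
  intro b b' h
  simp only at h
  have hrel : α.rel b b' := hinj a b b' (h ▸ α.iseqv.refl _)
  have hg : (QL b * (QL b')⁻¹ : Equiv.Perm Q) ∈ DisRel Q α :=
    Subgroup.subset_closure ⟨b, b', hrel, rfl⟩
  have hfix : (QL b * (QL b')⁻¹ : Equiv.Perm Q) (b' ◃ a) = b' ◃ a := by
    have h1 : (QL b')⁻¹ (b' ◃ a) = a := by
      simp [QL, Rack.invAct_apply, Rack.left_inv]
    simp only [Equiv.Perm.mul_apply, h1]
    simpa [QL, Rack.act'_apply] using h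
  have hall : ∀ y : Q, (QL b * (QL b')⁻¹ : Equiv.Perm Q) y = y := by
    intro y
    obtain ⟨g, hgDis, hgy⟩ := hconn (b' ◃ a) y
    have hc := hcent.1 _ hg _ hgDis
    calc (QL b * (QL b')⁻¹ : Equiv.Perm Q) y
        = ((QL b * (QL b')⁻¹) * g) (b' ◃ a) := by
          simp [Equiv.Perm.mul_apply, hgy]
      _ = (g * (QL b * (QL b')⁻¹)) (b' ◃ a) := by rw [hc]
      _ = y := by simp [Equiv.Perm.mul_apply, hfix, hgy]
  have hQL : QL b = QL b' := by
    ext c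
    have := hall (QL b' c)
    simpa [Equiv.Perm.mul_apply] using this
  exact hfaith hQL
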